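/- Let x ∈ X with T^{-1}(x) ∉ A and κ(x) = s_0 ≥ 5, where κ counts leading zeros. Define n_0 = 0, s_p = κ(T^{n_p}(x)), n_{p+1} = n_p + 2^{s_p}, assuming all s_p are finite. Then for every k ≥ 5 and every p ≥ 0, the number of indices i with n_p ≤ i < n_{p+1} and T^i(x) ∈ E_k is at most 2^{s_p} · (k+2)/2^k, where E_k = ⋃_{i=k+1}^{∞} ⋃_{j=0}^{i-1} T^j([0^i]). -/

import Mathlib

open MeasureTheory Filter Topology
open scoped ENNReal

/-- The odometer map on `X = {0,1}^ℕ` (adding one with carry in binary). -/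
def Tod (x : ℕ → Bool) : ℕ → Bool := fun k =>
  if ∀ i < k, x i = true then !(x k) else x k

/-- The inverse of the odometer map (subtracting one with borrow). -/
def TodInv (x : ℕ → Bool) : ℕ → Bool := fun k =>
  if ∀ i < k, x i = false then !(x k) else x k

/-- The number determined by the first `k` binary digits of `x`. -/
def DN (k : ℕ) (x : ℕ → Bool) : ℕ := ∑ i ∈ Finset.range k, 2 ^ i * (x i).toNat

/-- The cylinder `[0^i]` of sequences starting with `i` zeros. -/
def cyl0 (i : ℕ) : Set (ℕ → Bool) := {x | ∀ j < i, x j = false}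

/-- `A = ⋃_{i=5}^∞ ⋃_{j=0}^{i-1} T^j([0^i])`. -/
def Aset : Set (ℕ → Bool) := ⋃ (i : ℕ) (_ : 5 ≤ i) (j : ℕ) (_ : j < i), Tod^[j] '' cyl0 i

/-- `A_k = ⋃_{i=5}^{k} ⋃_{j=0}^{i-1} T^j([0^i])`. -/
def Ak (k : ℕ) : Set (ℕ → Bool) :=
  ⋃ (i : ℕ) (_ : 5 ≤ i) (_ : i ≤ k) (j : ℕ) (_ : j < i), Tod^[j] '' cyl0 i

/-- `E_k = ⋃_{i=k+1}^∞ ⋃_{j=0}^{i-1} T^j([0^i])`. -/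
def Ek (k : ℕ) : Set (ℕ → Bool) :=
  ⋃ (i : ℕ) (_ : k + 1 ≤ i) (j : ℕ) (_ : j < i), Tod^[j] '' cyl0 i

lemma sum_two_pow (k : ℕ) : (∑ i ∈ Finset.range k, 2 ^ i) + 1 = 2 ^ k := by
  induction k with
  | zero => simp
  | succ k ih => rw [Finset.sum_range_succ, pow_succ]; omega

lemma DN_lt (k : ℕ) (x : ℕ → Bool) : DN k x < 2 ^ k := by
  have h : DN k x ≤ ∑ i ∈ Finset.range k, 2 ^ i := by
    apply Finset.sum_le_sum
    intro i _
    have : (x i).toNat ≤ 1 := Bool.toNat_le _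
    nlinarith [Nat.pow_pos (n := i) (by norm_num : 0 < 2)]
  have := sum_two_pow k
  omega

lemma DN_all_true {k : ℕ} {x : ℕ → Bool} (h : ∀ i < k, x i = true) :
    DN k x + 1 = 2 ^ k := by
  have : DN k x = ∑ i ∈ Finset.range k, 2 ^ i := by
    apply Finset.sum_congr rfl
    intro i hi
    rw [h i (Finset.mem_range.mp hi)]
    simp
  rw [this]; exact sum_two_pow k

lemma DN_lt_of_false {k : ℕ} {x : ℕ → Bool} (h : ¬ ∀ i < k, x i = true) :
    DN k x + 1 < 2 ^ k := by
  push_neg at h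
  obtain ⟨i, hik, hxi⟩ := h
  have hxi' : x i = false := by cases hx : x i <;> simp_all
  have h1 : DN k x < ∑ j ∈ Finset.range k, 2 ^ j := by
    apply Finset.sum_lt_sum
    · intro j _
      have : (x j).toNat ≤ 1 := Bool.toNat_le _
      nlinarith [Nat.pow_pos (n := j) (by norm_num : 0 < 2)]
    · exact ⟨i, Finset.mem_range.mpr hik, by rw [hxi']; simp [Nat.pow_pos]⟩
  have := sum_two_pow k
  omega

lemma DN_pos_of_true {k : ℕ} {x : ℕ → Bool} (h : ¬ ∀ i < k, x i = false) :
    1 ≤ DN k x := by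
  push_neg at h
  obtain ⟨i, hik, hxi⟩ := h
  have hxi' : x i = true := by cases hx : x i <;> simp_all
  have : 2 ^ i * (x i).toNat ≤ DN k x :=
    Finset.single_le_sum (f := fun j => 2 ^ j * (x j).toNat)
      (fun j _ => Nat.zero_le _) (Finset.mem_range.mpr hik)
  rw [hxi'] at this
  simp at this
  have : 1 ≤ 2 ^ i := Nat.one_le_two_pow
  omega

lemma DN_Tod (k : ℕ) (x : ℕ → Bool) : DN k (Tod x) = (DN k x + 1) % 2 ^ k := by
  induction k with
  | zero => simp [DN]
  | succ k ih =>
    have hsplit : ∀ y : ℕ → Bool, DN (k+1) y = DN k y + 2 ^ k * (y k).toNat := by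
      intro y; rw [DN, Finset.sum_range_succ]; rfl
    have h3 : (2:ℕ)^(k+1) = 2^k + 2^k := by rw [pow_succ]; ring
    rw [hsplit, hsplit, ih]
    by_cases h : ∀ i < k, x i = true
    · have h1 : DN k x + 1 = 2 ^ k := DN_all_true h
      have h2 : Tod x k = !(x k) := by simp only [Tod]; rw [if_pos h]
      rw [h2, show (DN k x + 1) % 2^k = 0 by rw [h1, Nat.mod_self]]
      cases hx : x k
      · simp only [hx, Bool.not_false, Bool.toNat_true, Bool.toNat_false]
        rw [Nat.mod_eq_of_lt (a := DN k x + 2^k*0 + 1) (by omega)]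
        omega
      · simp only [hx, Bool.not_true, Bool.toNat_true, Bool.toNat_false]
        rw [show DN k x + 2^k*1 + 1 = 2^(k+1) by omega, Nat.mod_self]
        omega
    · have h1 : DN k x + 1 < 2 ^ k := DN_lt_of_false h
      have h2 : Tod x k = x k := by simp only [Tod]; rw [if_neg h]
      rw [h2, Nat.mod_eq_of_lt h1]
      cases hx : x k <;>
        simp only [hx, Bool.toNat_true, Bool.toNat_false] <;>
        rw [Nat.mod_eq_of_lt (by omega)] <;> omega

lemma DN_TodInv (k : ℕ) (x : ℕ → Bool) :
    DN k (TodInv x) = (DN k x + (2 ^ k - 1)) % 2 ^ k := by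
  induction k with
  | zero => simp [DN]
  | succ k ih =>
    have hsplit : ∀ y : ℕ → Bool, DN (k+1) y = DN k y + 2 ^ k * (y k).toNat := by
      intro y; rw [DN, Finset.sum_range_succ]; rfl
    have hpk : 1 ≤ (2:ℕ) ^ k := Nat.one_le_two_pow
    have h3 : (2:ℕ)^(k+1) = 2^k + 2^k := by rw [pow_succ]; ring
    rw [hsplit, hsplit, ih]
    by_cases h : ∀ i < k, x i = false
    · have h1 : DN k x = 0 := by
        apply Finset.sum_eq_zero
        intro i hi
        rw [h i (Finset.mem_range.mp hi)]; simp
      have h2 : TodInv x k = !(x k) := by simp only [TodInv]; rw [if_pos h]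
      rw [h2, h1, Nat.zero_add, Nat.mod_eq_of_lt (by omega : 2^k - 1 < 2^k)]
      cases hx : x k
      · simp only [hx, Bool.not_false, Bool.toNat_true, Bool.toNat_false]
        rw [Nat.mod_eq_of_lt (a := 0 + 2^k*0 + (2^(k+1) - 1)) (by omega)]
        omega
      · simp only [hx, Bool.not_true, Bool.toNat_true, Bool.toNat_false]
        rw [show 0 + 2^k*1 + (2^(k+1) - 1) = (2^k - 1) + 1*2^(k+1) by omega,
          Nat.add_mul_mod_self_right,
          Nat.mod_eq_of_lt (show 2^k - 1 < 2^(k+1) by omega)]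
        omega
    · have h1 : 1 ≤ DN k x := DN_pos_of_true h
      have h1' : DN k x < 2 ^ k := DN_lt k x
      have h2 : TodInv x k = x k := by simp only [TodInv]; rw [if_neg h]
      rw [h2, show DN k x + (2^k - 1) = (DN k x - 1) + 1*2^k by omega,
        Nat.add_mul_mod_self_right, Nat.mod_eq_of_lt (show DN k x - 1 < 2^k by omega)]
      cases hx : x k <;> simp only [hx, Bool.toNat_true, Bool.toNat_false]
      · rw [show DN k x + 2^k*0 + (2^(k+1) - 1) = (DN k x - 1 + 2^k*0) + 1*2^(k+1) by omega,
          Nat.add_mul_mod_self_right,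
          Nat.mod_eq_of_lt (show DN k x - 1 + 2^k*0 < 2^(k+1) by omega)]
      · rw [show DN k x + 2^k*1 + (2^(k+1) - 1) = (DN k x - 1 + 2^k*1) + 1*2^(k+1) by omega,
          Nat.add_mul_mod_self_right,
          Nat.mod_eq_of_lt (show DN k x - 1 + 2^k*1 < 2^(k+1) by omega)]

lemma todinv_cond (x : ℕ → Bool) (k : ℕ) :
    (∀ i < k, TodInv x i = true) ↔ (∀ i < k, x i = false) := by
  constructor
  · intro h i hik
    induction i using Nat.strong_induction_on with
    | _ i ih =>
      have h2 : ∀ j < i, x j = false := fun j hj => ih j hj (lt_trans hj hik)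
      have h3 := h i hik
      simp only [TodInv, if_pos h2] at h3
      cases hx : x i
      · rfl
      · rw [hx] at h3; simp at h3
  · intro h i hik
    have h2 : ∀ j < i, x j = false := fun j hj => h j (lt_trans hj hik)
    simp only [TodInv, if_pos h2, h i hik]
    rfl

lemma Tod_TodInv (x : ℕ → Bool) : Tod (TodInv x) = x := by
  funext k
  simp only [Tod]
  by_cases hc : ∀ i < k, x i = false
  · rw [if_pos ((todinv_cond x k).mpr hc)]
    simp only [TodInv, if_pos hc, Bool.not_not]
  · rw [if_neg (fun h => hc ((todinv_cond x k).mp h))]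
    simp only [TodInv, if_neg hc]

lemma Tod_iter_TodInv_iter (n : ℕ) (y : ℕ → Bool) : Tod^[n] (TodInv^[n] y) = y := by
  induction n with
  | zero => simp
  | succ n ih =>
    rw [Function.iterate_succ_apply' TodInv, Function.iterate_succ_apply Tod,
      Tod_TodInv, ih]

lemma DN_iter (k n : ℕ) (x : ℕ → Bool) :
    DN k (Tod^[n] x) = (DN k x + n) % 2 ^ k := by
  induction n generalizing x with
  | zero => simp [Nat.mod_eq_of_lt (DN_lt k x)]
  | succ n ih =>
    rw [Function.iterate_succ_apply, ih, DN_Tod, Nat.mod_add_mod]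
    ring_nf

lemma DN_iterInv (k n : ℕ) (x : ℕ → Bool) :
    DN k (TodInv^[n] x) = (DN k x + n * (2 ^ k - 1)) % 2 ^ k := by
  induction n generalizing x with
  | zero => simp [Nat.mod_eq_of_lt (DN_lt k x)]
  | succ n ih =>
    rw [Function.iterate_succ_apply, ih, DN_TodInv, Nat.mod_add_mod]
    congr 1
    ring

lemma DN_eq_zero_iff (k : ℕ) (x : ℕ → Bool) :
    DN k x = 0 ↔ ∀ j < k, x j = false := by
  constructor
  · intro h j hj
    rw [DN, Finset.sum_eq_zero_iff] at h
    have := h j (Finset.mem_range.mpr hj)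
    cases hx : x j
    · rfl
    · rw [hx] at this; simp at this
  · intro h
    apply Finset.sum_eq_zero
    intro i hi
    rw [h i (Finset.mem_range.mp hi)]; simp

lemma mem_image_iff {m j : ℕ} (hj : j < 2 ^ m) (y : ℕ → Bool) :
    y ∈ Tod^[j] '' cyl0 m ↔ DN m y = j := by
  constructor
  · rintro ⟨z, hz, rfl⟩
    have hz0 : DN m z = 0 := (DN_eq_zero_iff m z).mpr hz
    rw [DN_iter, hz0, Nat.zero_add, Nat.mod_eq_of_lt hj]
  · intro h
    refine ⟨TodInv^[j] y, ?_, Tod_iter_TodInv_iter j y⟩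
    show ∀ i < m, TodInv^[j] y i = false
    rw [← DN_eq_zero_iff m, DN_iterInv, h]
    have h1 : 1 ≤ (2:ℕ)^m := Nat.one_le_two_pow
    rw [show j + j * (2^m - 1) = j * 2^m by
      cases' Nat.exists_eq_add_of_le h1 with c hc
      rw [hc, Nat.add_sub_cancel_left]; ring]
    exact Nat.mul_mod_left j (2^m)

lemma DN_mod {m' m : ℕ} (h : m' ≤ m) (y : ℕ → Bool) :
    DN m y % 2 ^ m' = DN m' y := by
  have hsplit : DN m y = DN m' y + ∑ i ∈ Finset.Ico m' m, 2 ^ i * (y i).toNat := by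
    rw [DN, DN, Finset.range_eq_Ico, Finset.range_eq_Ico]
    exact (Finset.sum_Ico_consecutive (fun i => 2 ^ i * (y i).toNat) (Nat.zero_le m') h).symm
  have hdvd : ∑ i ∈ Finset.Ico m' m, 2 ^ i * (y i).toNat
      = 2 ^ m' * ∑ i ∈ Finset.Ico m' m, 2 ^ (i - m') * (y i).toNat := by
    rw [Finset.mul_sum]
    apply Finset.sum_congr rfl
    intro i hi
    have hi' : m' ≤ i := (Finset.mem_Ico.mp hi).1
    rw [← mul_assoc, ← pow_add, Nat.add_sub_cancel' hi']
  rw [hsplit, hdvd, Nat.add_mul_mod_self_left, Nat.mod_eq_of_lt (DN_lt m' y)]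

lemma mem_Ek_iff (k : ℕ) (y : ℕ → Bool) :
    y ∈ Ek k ↔ ∃ m, k + 1 ≤ m ∧ DN m y < m := by
  simp only [Ek, Set.mem_iUnion]
  constructor
  · rintro ⟨m, hm, j, hj, hy⟩
    have hj2 : j < 2 ^ m := lt_of_lt_of_le hj (Nat.lt_two_pow_self (n := m)).le
    exact ⟨m, hm, by rw [(mem_image_iff hj2 y).mp hy]; exact hj⟩
  · rintro ⟨m, hm, hlt⟩
    exact ⟨m, hm, DN m y, hlt, (mem_image_iff (DN_lt m y) y).mpr rfl⟩

lemma mem_Aset_iff (y : ℕ → Bool) :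
    y ∈ Aset ↔ ∃ m, 5 ≤ m ∧ DN m y < m := by
  simp only [Aset, Set.mem_iUnion]
  constructor
  · rintro ⟨m, hm, j, hj, hy⟩
    have hj2 : j < 2 ^ m := lt_of_lt_of_le hj (Nat.lt_two_pow_self (n := m)).le
    exact ⟨m, hm, by rw [(mem_image_iff hj2 y).mp hy]; exact hj⟩
  · rintro ⟨m, hm, hlt⟩
    exact ⟨m, hm, DN m y, hlt, (mem_image_iff (DN_lt m y) y).mpr rfl⟩

lemma count_le (n s m : ℕ) (hm : m ≤ s) :
    ((Finset.Ico n (n + 2 ^ s)).filter (fun i => (i - n) % 2 ^ m < m)).card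
      ≤ m * 2 ^ (s - m) := by
  classical
  have hcard : (Finset.range m ×ˢ Finset.range (2 ^ (s - m))).card = m * 2 ^ (s - m) := by
    rw [Finset.card_product, Finset.card_range, Finset.card_range]
  rw [← hcard]
  apply Finset.card_le_card_of_injOn (fun i => ((i - n) % 2 ^ m, (i - n) / 2 ^ m))
  · intro i hi
    simp only [Finset.mem_coe, Finset.mem_filter, Finset.mem_Ico] at hi
    obtain ⟨⟨h1, h2⟩, h3⟩ := hi
    simp only [Finset.mem_coe, Finset.mem_product, Finset.mem_range]
    constructor
    · exact h3
    · have hlt : i - n < 2 ^ s := by omega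
      have hpow : (2:ℕ) ^ s = 2 ^ (s - m) * 2 ^ m := by
        rw [← pow_add]; congr 1; omega
      have hpow2 : (2:ℕ) ^ s = 2 ^ m * 2 ^ (s - m) := by
        rw [← pow_add]; congr 1; omega
      exact Nat.div_lt_of_lt_mul (by omega)
  · intro i hi j hj hij
    simp only [Finset.mem_coe, Finset.mem_filter, Finset.mem_Ico] at hi hj
    have e1 := Nat.mod_add_div (i - n) (2 ^ m)
    have e2 := Nat.mod_add_div (j - n) (2 ^ m)
    have hfst : (i - n) % 2 ^ m = (j - n) % 2 ^ m := congrArg Prod.fst hij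
    have hsnd : (i - n) / 2 ^ m = (j - n) / 2 ^ m := congrArg Prod.snd hij
    have : i - n = j - n := by rw [← e1, ← e2, hfst, hsnd]
    omega

lemma sum_geom_eq (k : ℕ) : ∀ s, k ≤ s →
    (∑ m ∈ Finset.Icc (k + 1) s, (m : ℝ) / 2 ^ m) = (k + 2) / 2 ^ k - (s + 2) / 2 ^ s := by
  intro s hs
  induction s, hs using Nat.le_induction with
  | base => rw [Finset.Icc_eq_empty (by omega)]; simp
  | succ s hs ih =>
    rw [Finset.sum_Icc_succ_top (by omega), ih]
    have h1 : (2:ℝ) ^ s > 0 := by positivity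
    have h2 : (2:ℝ) ^ (s + 1) = 2 * 2 ^ s := by ring
    push_cast
    rw [h2]
    field_simp
    ring

/-- in the setting of the recursively defined times `n_p`, for every `k ≥ 5`
and every `p`, the number of indices `n_p ≤ i < n_{p+1}` with `T^i(x) ∈ E_k` is at most
`2^{s_p} · (k+2)/2^k`. -/
theorem stmt7 (x : ℕ → Bool)
    (hpre : ∀ y, Tod y = x → y ∉ Aset)
    (s nn : ℕ → ℕ)
    (hn0 : nn 0 = 0)
    (hs0 : 5 ≤ s 0)
    (hκ : ∀ p, (∀ i < s p, Tod^[nn p] x i = false) ∧ Tod^[nn p] x (s p) = true)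
    (hrec : ∀ p, nn (p + 1) = nn p + 2 ^ s p) :
    ∀ k, 5 ≤ k → ∀ p,
      (({i : ℕ | nn p ≤ i ∧ i < nn (p + 1) ∧ Tod^[i] x ∈ Ek k}.ncard : ℝ)) ≤
        2 ^ s p * ((k : ℝ) + 2) / 2 ^ k := by
  classical
  have F1 : ∀ q m, m ≤ s q → DN m (Tod^[nn q] x) = 0 := by
    intro q m hm
    rw [DN_eq_zero_iff]
    intro j hj
    exact (hκ q).1 j (lt_of_lt_of_le hj hm)
  have F2 : ∀ q m, s q < m → DN m (Tod^[nn q] x) % 2 ^ (s q + 1) = 2 ^ (s q) := by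
    intro q m hm
    rw [DN_mod (by omega), DN, Finset.sum_range_succ,
      show (∑ i ∈ Finset.range (s q), 2 ^ i * ((Tod^[nn q] x) i).toNat) = 0 from
        Finset.sum_eq_zero fun i hi => by
          rw [(hκ q).1 i (Finset.mem_range.mp hi)]; simp,
      (hκ q).2]
    simp
  have F4 : ∀ q m, s q < m → DN m (Tod^[nn q] x) + 2 ^ (s q) ≤ 2 ^ m := by
    intro q m hm
    set A := DN m (Tod^[nn q] x) with hA
    have h1 : A % 2 ^ (s q + 1) = 2 ^ (s q) := F2 q m hm
    have h2 : A < 2 ^ m := DN_lt m _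
    have hq := Nat.div_add_mod A (2 ^ (s q + 1))
    set Q := A / 2 ^ (s q + 1) with hQ
    have h5 : (2:ℕ) ^ (s q + 1) = 2 ^ (s q) + 2 ^ (s q) := by rw [pow_succ]; ring
    have e : A + 2 ^ (s q) = 2 ^ (s q + 1) * (Q + 1) := by
      rw [Nat.mul_add, Nat.mul_one]
      omega
    have hpow : (2:ℕ) ^ m = 2 ^ (s q + 1) * 2 ^ (m - s q - 1) := by
      rw [← pow_add]; congr 1; omega
    have hQlt : Q + 1 ≤ 2 ^ (m - s q - 1) := by
      by_contra hcon
      push_neg at hcon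
      have hge : 2 ^ (m - s q - 1) ≤ Q := by omega
      have := Nat.mul_le_mul_left (2 ^ (s q + 1)) hge
      omega
    calc A + 2 ^ s q = 2 ^ (s q + 1) * (Q + 1) := e
      _ ≤ 2 ^ (s q + 1) * 2 ^ (m - s q - 1) := Nat.mul_le_mul_left _ hQlt
      _ = 2 ^ m := hpow.symm
  have C : ∀ q m, 5 ≤ m → s q < m → m + 1 ≤ DN m (Tod^[nn q] x) := by
    intro q
    induction q with
    | zero =>
      intro m hm5 hsm
      have hy : Tod (TodInv x) = x := Tod_TodInv x
      have hAs := hpre (TodInv x) hy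
      rw [mem_Aset_iff] at hAs
      push_neg at hAs
      have h1 : m ≤ DN m (TodInv x) := hAs m hm5
      have h2 : DN m (TodInv x) < 2 ^ m := DN_lt _ _
      have h3 : DN m x = (DN m (TodInv x) + 1) % 2 ^ m := by
        conv_lhs => rw [← hy]
        rw [DN_Tod]
      have hne : DN m (Tod^[nn 0] x) ≠ 0 := by
        intro h0
        have hf2 := F2 0 m hsm
        rw [h0, Nat.zero_mod] at hf2
        exact absurd hf2.symm (by positivity : (0:ℕ) < 2 ^ s 0).ne'
      have hx0 : Tod^[nn 0] x = x := by rw [hn0]; exact Function.iterate_zero_apply Tod x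
      rw [hx0] at hne ⊢
      rcases Nat.lt_or_ge (DN m (TodInv x) + 1) (2 ^ m) with hlt | hge
      · rw [h3, Nat.mod_eq_of_lt hlt]; omega
      · exfalso
        apply hne
        rw [h3, show DN m (TodInv x) + 1 = 2 ^ m by omega, Nat.mod_self]
    | succ q ih =>
      intro m hm5 hsm
      have hrw : DN m (Tod^[nn (q+1)] x) = (DN m (Tod^[nn q] x) + 2 ^ s q) % 2 ^ m := by
        rw [hrec q, add_comm (nn q), Function.iterate_add_apply, DN_iter]
      have hne : DN m (Tod^[nn (q+1)] x) ≠ 0 := by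
        intro h0
        have h2 := F2 (q+1) m hsm
        rw [h0, Nat.zero_mod] at h2
        exact absurd h2.symm (by positivity : (0:ℕ) < 2 ^ s (q+1)).ne'
      by_cases hms : m ≤ s q
      · exfalso
        apply hne
        rw [hrw, F1 q m hms, Nat.zero_add]
        exact Nat.mod_eq_zero_of_dvd (pow_dvd_pow 2 hms)
      · push_neg at hms
        have h1 := ih m hm5 hms
        have h2 := F4 q m hms
        rcases eq_or_lt_of_le h2 with heq | hlt
        · exfalso
          apply hne
          rw [hrw, heq, Nat.mod_self]
        · have h3 : (DN m (Tod^[nn q] x) + 2 ^ s q) % 2 ^ m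
              = DN m (Tod^[nn q] x) + 2 ^ s q := Nat.mod_eq_of_lt hlt
          rw [hrw, h3]
          exact le_trans h1 (Nat.le_add_right _ _)
  intro k hk p
  have hnp1 : nn (p+1) = nn p + 2 ^ s p := hrec p
  set F := (Finset.Ico (nn p) (nn p + 2 ^ s p)).filter (fun i => Tod^[i] x ∈ Ek k) with hF
  have hSF : {i : ℕ | nn p ≤ i ∧ i < nn (p + 1) ∧ Tod^[i] x ∈ Ek k} = ↑F := by
    ext i
    simp only [Set.mem_setOf_eq, hF, Finset.coe_filter, Finset.mem_Ico, hnp1]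
    tauto
  rw [hSF, Set.ncard_coe_finset]
  have hsub : F ⊆ (Finset.Icc (k+1) (s p)).biUnion
      (fun m => (Finset.Ico (nn p) (nn p + 2 ^ s p)).filter
        (fun i => (i - nn p) % 2 ^ m < m)) := by
    intro i hi
    rw [hF, Finset.mem_filter, Finset.mem_Ico] at hi
    obtain ⟨⟨h1, h2⟩, h3⟩ := hi
    rw [mem_Ek_iff] at h3
    obtain ⟨m, hm1, hm2⟩ := h3
    have hDN : DN m (Tod^[i] x) = (DN m (Tod^[nn p] x) + (i - nn p)) % 2 ^ m := by
      conv_lhs => rw [show i = (i - nn p) + nn p by omega]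
      rw [Function.iterate_add_apply, DN_iter]
    have hmsp : m ≤ s p := by
      by_contra hcon
      push_neg at hcon
      have hC := C p m (by omega) hcon
      have hF4 := F4 p m hcon
      have heq : DN m (Tod^[i] x) = DN m (Tod^[nn p] x) + (i - nn p) := by
        rw [hDN, Nat.mod_eq_of_lt (by omega)]
      omega
    rw [Finset.mem_biUnion]
    refine ⟨m, Finset.mem_Icc.mpr ⟨hm1, hmsp⟩, ?_⟩
    rw [Finset.mem_filter, Finset.mem_Ico]
    refine ⟨⟨h1, h2⟩, ?_⟩
    rw [hDN, F1 p m hmsp, Nat.zero_add] at hm2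
    exact hm2
  have hcard : F.card ≤ ∑ m ∈ Finset.Icc (k+1) (s p), m * 2 ^ (s p - m) :=
    calc F.card ≤ _ := Finset.card_le_card hsub
      _ ≤ ∑ m ∈ Finset.Icc (k+1) (s p),
            ((Finset.Ico (nn p) (nn p + 2 ^ s p)).filter
              (fun i => (i - nn p) % 2 ^ m < m)).card := Finset.card_biUnion_le
      _ ≤ _ := Finset.sum_le_sum fun m hm =>
            count_le (nn p) (s p) m (Finset.mem_Icc.mp hm).2
  have hc2 : (F.card : ℝ) ≤ ∑ m ∈ Finset.Icc (k+1) (s p), ((m : ℝ) * 2 ^ (s p - m)) := by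
    have h := (Nat.cast_le (α := ℝ)).mpr hcard
    push_cast at h
    exact h
  have hsum : (∑ m ∈ Finset.Icc (k+1) (s p), ((m : ℝ) * 2 ^ (s p - m)))
      = 2 ^ s p * ∑ m ∈ Finset.Icc (k+1) (s p), (m : ℝ) / 2 ^ m := by
    rw [Finset.mul_sum]
    apply Finset.sum_congr rfl
    intro m hm
    have hmsp := (Finset.mem_Icc.mp hm).2
    have hp : (2:ℝ) ^ (s p - m) * 2 ^ m = 2 ^ s p := by rw [← pow_add]; congr 1; omega
    have h2m : (2:ℝ) ^ m ≠ 0 := by positivity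
    field_simp
    linear_combination (m : ℝ) * hp
  have hgeom : (∑ m ∈ Finset.Icc (k+1) (s p), (m : ℝ) / 2 ^ m) ≤ ((k : ℝ) + 2) / 2 ^ k := by
    rcases le_or_gt k (s p) with hks | hks
    · rw [sum_geom_eq k (s p) hks]
      have hpos : (0:ℝ) ≤ ((s p : ℝ) + 2) / 2 ^ (s p) := by positivity
      linarith
    · rw [Finset.Icc_eq_empty (by omega)]
      simp
      positivity
  calc (F.card : ℝ) ≤ ∑ m ∈ Finset.Icc (k+1) (s p), ((m : ℝ) * 2 ^ (s p - m)) := hc2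
    _ = 2 ^ s p * ∑ m ∈ Finset.Icc (k+1) (s p), (m : ℝ) / 2 ^ m := hsum
    _ ≤ 2 ^ s p * (((k : ℝ) + 2) / 2 ^ k) := by
        apply mul_le_mul_of_nonneg_left hgeom
        positivity
    _ = 2 ^ s p * ((k : ℝ) + 2) / 2 ^ k := by ring
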